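/- For a finite connected graph G=(V,E) with unit resistances and distinct vertices u, v, the effective resistance between u and v equals 2/λ₂(G,{u,v}). -/

import Mathlib

open Finset Pointwise

variable {V : Type*}

noncomputable def energy [Fintype V] (G : SimpleGraph V) [DecidableRel G.Adj]
    (f : V → ℝ) : ℝ :=
  (∑ x, ∑ y, if G.Adj x y then (f x - f y) ^ 2 else 0) / 2

noncomputable def lambda2 [Fintype V] (G : SimpleGraph V) [DecidableRel G.Adj]
    (Ω : Finset V) : ℝ :=
  sInf {r : ℝ | ∃ f : V → ℝ, (∑ x ∈ Ω, f x) = 0 ∧ (∃ x ∈ Ω, f x ≠ 0) ∧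
    r = energy G f / ∑ x ∈ Ω, (f x) ^ 2}

/-- The effective resistance between `u` and `v` in a unit electrical network,
i.e. the inverse of the minimal Dirichlet energy among potentials with
`f u = 1`, `f v = 0`. -/
noncomputable def effRes [Fintype V] (G : SimpleGraph V) [DecidableRel G.Adj]
    (u v : V) : ℝ :=
  (sInf {r : ℝ | ∃ f : V → ℝ, f u = 1 ∧ f v = 0 ∧ r = energy G f})⁻¹

lemma energy_affine [Fintype V] (G : SimpleGraph V) [DecidableRel G.Adj]
    (a b : ℝ) (g : V → ℝ) :
    energy G (fun x => a * g x + b) = a ^ 2 * energy G g := by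
  unfold energy
  have h : ∀ x y : V, (if G.Adj x y then ((a * g x + b) - (a * g y + b)) ^ 2 else 0)
      = a ^ 2 * (if G.Adj x y then (g x - g y) ^ 2 else 0) := by
    intro x y; split <;> ring
  simp only [h, ← Finset.mul_sum]
  ring

/-- In a finite connected unit electrical network, the effective resistance between
two distinct vertices `u, v` equals `2 / λ₂(G, {u, v})`. -/
theorem stmt7 [Fintype V] [DecidableEq V] (G : SimpleGraph V) [DecidableRel G.Adj]
    (hG : G.Connected) (u v : V) (huv : u ≠ v) :
    effRes G u v = 2 / lambda2 G {u, v} := by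
  set B : Set ℝ := {r : ℝ | ∃ f : V → ℝ, f u = 1 ∧ f v = 0 ∧ r = energy G f} with hB
  have hsetA : {r : ℝ | ∃ f : V → ℝ, (∑ x ∈ ({u, v} : Finset V), f x) = 0 ∧
      (∃ x ∈ ({u, v} : Finset V), f x ≠ 0) ∧
      r = energy G f / ∑ x ∈ ({u, v} : Finset V), (f x) ^ 2} = (2 : ℝ) • B := by
    ext r
    simp only [Set.mem_setOf_eq, Set.mem_smul_set, smul_eq_mul,
      Finset.sum_pair huv, Finset.mem_insert, Finset.mem_singleton]
    constructor
    · rintro ⟨g, hsum, hne, hr⟩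
      have hgv : g v = -g u := by linarith
      have hgu : g u ≠ 0 := by
        rcases hne with ⟨x, hx, hxne⟩
        rcases hx with rfl | rfl
        · exact hxne
        · intro h; apply hxne; rw [hgv, h, neg_zero]
      have h2c : (2 * g u) ≠ 0 := by
        intro h; apply hgu; linarith [mul_eq_zero.mp h]
      refine ⟨energy G (fun x => (2 * g u)⁻¹ * g x + 2⁻¹),
        ⟨fun x => (2 * g u)⁻¹ * g x + 2⁻¹, ?_, ?_, rfl⟩, ?_⟩
      · show (2 * g u)⁻¹ * g u + 2⁻¹ = 1
        field_simp; ring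
      · show (2 * g u)⁻¹ * g v + 2⁻¹ = 0
        rw [hgv]; field_simp; ring
      · rw [energy_affine, hr, hgv]
        have hne2 : g u ^ 2 + (-g u) ^ 2 ≠ 0 := by
          intro h; apply hgu; nlinarith [sq_nonneg (g u)]
        rw [eq_div_iff hne2]
        field_simp
        ring
    · rintro ⟨e, ⟨f, hfu, hfv, he⟩, hr⟩
      refine ⟨fun x => f x - 2⁻¹, ?_, ⟨u, Or.inl rfl, ?_⟩, ?_⟩
      · show (f u - 2⁻¹) + (f v - 2⁻¹) = 0
        rw [hfu, hfv]; ring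
      · show f u - 2⁻¹ ≠ 0
        rw [hfu]; norm_num
      · have hE : energy G (fun x => f x - 2⁻¹) = energy G f := by
          have := energy_affine G 1 (-2⁻¹) f
          simpa [sub_eq_add_neg] using this
        show r = energy G (fun x => f x - 2⁻¹) / ((f u - 2⁻¹) ^ 2 + (f v - 2⁻¹) ^ 2)
        rw [hE, hfu, hfv, ← hr, he]
        rw [eq_div_iff (by norm_num)]
        ring
  have hAB : lambda2 G {u, v} = 2 * sInf B := by
    rw [lambda2, hsetA, Real.sInf_smul_of_nonneg (by norm_num), smul_eq_mul]
  rw [effRes, ← hB, hAB, ← div_div]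
  norm_num
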